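/- Let z ∈ ℂ with Re z ≤ 0 and Re z ≠ 0, and define ρ_n(z) = ∫_0^2 U_n(s-1) e^{zs} ds, where U_n is the Chebyshev polynomial of the second kind. Then |ρ_n(z)| ≤ min{ 2, (2|Re z|)^{-1/2} (log(n+1) + 2)^{1/2} }. -/

import Mathlib

open Polynomial Polynomial.Chebyshev

open Real intervalIntegral

lemma log_mid {t : ℝ} (h0 : 0 ≤ t) (h1 : t < 1) :
    2 * t ≤ Real.log (1 + t) - Real.log (1 - t) := by
  set f : ℝ → ℝ := fun x => Real.log (1 + x) - Real.log (1 - x) - 2 * x with hf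
  have key : ∀ x, 0 ≤ x → x < 1 →
      HasDerivAt f (1/(1+x) + 1/(1-x) - 2) x := by
    intro x hx0 hx1
    have h1x : (1:ℝ) + x ≠ 0 := by nlinarith
    have h2x : (1:ℝ) - x ≠ 0 := by nlinarith
    have d1 : HasDerivAt (fun x : ℝ => Real.log (1 + x)) (1/(1+x)) x := by
      simpa using ((hasDerivAt_id x).const_add 1).log h1x
    have d2 : HasDerivAt (fun x : ℝ => Real.log (1 - x)) (-(1/(1-x))) x := by
      simpa [div_eq_mul_inv] using ((hasDerivAt_id x).const_sub 1).log h2x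
    have := (d1.sub d2).sub ((hasDerivAt_id x).const_mul 2)
    exact this.congr_deriv (by ring)
  have mono : MonotoneOn f (Set.Ico 0 1) := by
    apply monotoneOn_of_deriv_nonneg (convex_Ico 0 1)
    · apply ContinuousOn.sub (ContinuousOn.sub ?_ ?_) (by fun_prop)
      · apply ContinuousOn.log (by fun_prop)
        intro x hx; simp at hx; nlinarith [hx.1]
      · apply ContinuousOn.log (by fun_prop)
        intro x hx; simp at hx; nlinarith [hx.2]
    · rw [interior_Ico]
      intro x hx
      exact (key x hx.1.le hx.2).differentiableAt.differentiableWithinAt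
    · rw [interior_Ico]
      intro x hx
      rw [(key x hx.1.le hx.2).deriv]
      have hx0 := hx.1; have hx1 := hx.2
      have : (0:ℝ) < 1 + x := by linarith
      have : (0:ℝ) < 1 - x := by linarith
      rw [div_add_div _ _ (by positivity) (by positivity), div_sub' (by positivity)]
      apply div_nonneg _ (by positivity)
      nlinarith
  have h := mono (Set.mem_Ico.2 ⟨le_refl 0, one_pos⟩) (Set.mem_Ico.2 ⟨h0, h1⟩) h0
  simp [hf] at h
  linarith

lemma log_step {k : ℝ} (hk : 1 ≤ k) : 2/(2*k+1) ≤ Real.log (k+1) - Real.log k := by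
  have h2k : (0:ℝ) < 2*k+1 := by linarith
  have h := log_mid (t := 1/(2*k+1)) (by positivity) (by rw [div_lt_one h2k]; linarith)
  have e1 : 1 + 1/(2*k+1) = (2*k+2)/(2*k+1) := by field_simp; ring
  have e2 : 1 - 1/(2*k+1) = (2*k)/(2*k+1) := by field_simp; ring
  rw [e1, e2, Real.log_div (by positivity) (by positivity),
    Real.log_div (by positivity) (by positivity)] at h
  have e3 : Real.log (2*k+2) = Real.log 2 + Real.log (k+1) := by
    rw [← Real.log_mul (by norm_num) (by positivity)]; ring_nf
  have e4 : Real.log (2*k) = Real.log 2 + Real.log k := by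
    rw [← Real.log_mul (by norm_num) (by positivity)]
  rw [e3, e4] at h
  calc 2/(2*k+1) = 2 * (1/(2*k+1)) := by ring
    _ ≤ _ := by linarith

lemma sum_bound (n : ℕ) :
    ∑ k ∈ Finset.range (n+1), 2/(2*(k:ℝ)+1) ≤ Real.log ((n:ℝ)+1) + 2 := by
  induction n with
  | zero => simp
  | succ m ih =>
    rw [Finset.sum_range_succ]
    have h := log_step (k := (m:ℝ)+1) (by push_cast; linarith [Nat.cast_nonneg (α := ℝ) m]) -- X
    push_cast
    push_cast at ih h
    linarith

lemma trig_telescope (n : ℕ) (θ : ℝ) :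
    ∑ k ∈ Finset.range (n+1), Real.sin θ * Real.sin ((2*(k:ℝ)+1)*θ)
      = Real.sin (((n:ℝ)+1)*θ) ^ 2 := by
  have term : ∀ k : ℕ, Real.sin θ * Real.sin ((2*(k:ℝ)+1)*θ)
      = (Real.cos (2*(k:ℝ)*θ) - Real.cos (2*((k:ℝ)+1)*θ)) / 2 := by
    intro k
    rw [Real.cos_sub_cos]
    have e1 : (2*(k:ℝ)*θ + 2*((k:ℝ)+1)*θ)/2 = (2*(k:ℝ)+1)*θ := by ring
    have e2 : (2*(k:ℝ)*θ - 2*((k:ℝ)+1)*θ)/2 = -θ := by ring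
    rw [e1, e2, Real.sin_neg]
    ring
  calc ∑ k ∈ Finset.range (n+1), Real.sin θ * Real.sin ((2*(k:ℝ)+1)*θ)
      = ∑ k ∈ Finset.range (n+1),
          ((fun k : ℕ => Real.cos (2*(k:ℝ)*θ)/2) k
            - (fun k : ℕ => Real.cos (2*(k:ℝ)*θ)/2) (k+1)) := by
        apply Finset.sum_congr rfl
        intro k _
        rw [term k]
        push_cast
        ring_nf
    _ = Real.cos (2*(0:ℝ)*θ)/2 - Real.cos (2*((n:ℝ)+1)*θ)/2 := by
        rw [Finset.sum_range_sub']
        push_cast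
        ring_nf
    _ = Real.sin (((n:ℝ)+1)*θ) ^ 2 := by
        have := Real.cos_two_mul (((n:ℝ)+1)*θ)
        have h2 := Real.sin_sq_add_cos_sq (((n:ℝ)+1)*θ)
        have e : 2*((n:ℝ)+1)*θ = 2*((((n:ℝ)+1))*θ) := by ring
        rw [e, this]
        simp
        nlinarith

lemma U_sq_eq (n : ℕ) :
    (U ℝ n)^2 = ∑ k ∈ Finset.range (n+1), U ℝ (2*k) := by
  apply Polynomial.eq_of_infinite_eval_eq
  apply Set.Infinite.mono (s := Set.Ioo (-1:ℝ) 1) _ (Set.Ioo_infinite (by norm_num))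
  intro x hx
  simp only [Set.mem_setOf_eq]
  rw [Polynomial.eval_pow, Polynomial.eval_finset_sum]
  obtain ⟨hx1, hx2⟩ := hx
  set θ := Real.arccos x with hθ
  have hcos : Real.cos θ = x := Real.cos_arccos hx1.le hx2.le
  have hsin : 0 < Real.sin θ := by
    rw [hθ, Real.sin_arccos]
    have : 0 < 1 - x^2 := by nlinarith
    positivity
  have hU : ∀ m : ℤ, (U ℝ m).eval x * Real.sin θ = Real.sin (((m:ℝ) + 1) * θ) := by
    intro m
    rw [← hcos]
    exact U_real_cos θ m
  have key := trig_telescope n θ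
  have lhs : (U ℝ n).eval x ^ 2 * Real.sin θ ^ 2 = Real.sin (((n:ℝ)+1)*θ)^2 := by
    have h := hU (n:ℤ)
    push_cast at h
    rw [← h]
    ring
  have rhs : (∑ k ∈ Finset.range (n+1), (U ℝ (2*k)).eval x) * Real.sin θ ^ 2
      = Real.sin (((n:ℝ)+1)*θ)^2 := by
    rw [← key, Finset.sum_mul]
    apply Finset.sum_congr rfl
    intro k _
    have := hU (2*k)
    push_cast at this ⊢
    nlinarith [this]
  have : (U ℝ n).eval x ^ 2 * Real.sin θ ^ 2
      = (∑ k ∈ Finset.range (n+1), (U ℝ (2*k)).eval x) * Real.sin θ ^ 2 := by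
    rw [lhs, rhs]
  have hs2 : Real.sin θ ^ 2 ≠ 0 := by positivity
  exact mul_right_cancel₀ hs2 this

lemma T_eval_one (m : ℤ) : (T ℝ m).eval 1 = 1 := by
  have := T_real_cos 0 m
  simpa using this

lemma T_eval_neg_one (k : ℕ) : (T ℝ (2*k+1)).eval (-1) = -1 := by
  have := T_real_cos π (2*k+1)
  rw [Real.cos_pi] at this
  rw [this]
  push_cast
  have : ((2*(k:ℝ)+1)) * π = π + (k:ℤ) * (2*π) := by push_cast; ring
  rw [this, Real.cos_add_int_mul_two_pi, Real.cos_pi]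

lemma U_even_integral (k : ℕ) :
    ∫ x in (-1:ℝ)..1, (U ℝ (2*k)).eval x = 2/(2*(k:ℝ)+1) := by
  have hd : ∀ x : ℝ, HasDerivAt (fun y => (T ℝ (2*k+1)).eval y / (2*(k:ℝ)+1))
      ((U ℝ (2*k)).eval x) x := by
    intro x
    have h1 : HasDerivAt (fun y => (T ℝ (2*k+1)).eval y)
        ((derivative (T ℝ (2*k+1))).eval x) x := Polynomial.hasDerivAt _ x
    have h2 : (derivative (T ℝ (2*k+1))).eval x = (2*(k:ℝ)+1) * (U ℝ (2*k)).eval x := by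
      rw [T_derivative_eq_U]
      have : (2*k+1-1 : ℤ) = 2*k := by ring
      rw [this]
      simp only [Polynomial.eval_mul, Polynomial.eval_intCast]
      push_cast
      ring
    have := h1.div_const (2*(k:ℝ)+1)
    rw [h2] at this
    have hne : (2*(k:ℝ)+1) ≠ 0 := by positivity
    exact this.congr_deriv (mul_div_cancel_left₀ _ hne)
  rw [intervalIntegral.integral_eq_sub_of_hasDerivAt (fun x _ => hd x)
    ((Polynomial.continuous _).intervalIntegrable _ _)]
  rw [_root_.T_eval_one, _root_.T_eval_neg_one]
  ring

lemma U_sq_integral (n : ℕ) :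
    ∫ s in (0:ℝ)..2, ((U ℝ n).eval (s-1))^2 ≤ Real.log ((n:ℝ)+1) + 2 := by
  have e1 : ∀ s : ℝ, ((U ℝ n).eval (s-1))^2
      = ∑ k ∈ Finset.range (n+1), (U ℝ (2*k)).eval (s-1) := by
    intro s
    have := congrArg (Polynomial.eval (s-1)) (U_sq_eq n)
    simpa [Polynomial.eval_pow, Polynomial.eval_finset_sum] using this
  calc ∫ s in (0:ℝ)..2, ((U ℝ n).eval (s-1))^2
      = ∫ s in (0:ℝ)..2, ∑ k ∈ Finset.range (n+1), (U ℝ (2*k)).eval (s-1) := by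
        simp_rw [e1]
    _ = ∑ k ∈ Finset.range (n+1), ∫ s in (0:ℝ)..2, (U ℝ (2*k)).eval (s-1) := by
        apply intervalIntegral.integral_finset_sum
        intro k _
        exact ((Polynomial.continuous (U ℝ (2*(k:ℤ)))).comp
          (continuous_id.sub continuous_const)).intervalIntegrable _ _
    _ = ∑ k ∈ Finset.range (n+1), 2/(2*(k:ℝ)+1) := by
        apply Finset.sum_congr rfl
        intro k _
        rw [intervalIntegral.integral_comp_sub_right (fun x => (U ℝ (2*k)).eval x) 1]
        norm_num [U_even_integral k]
    _ ≤ Real.log ((n:ℝ)+1) + 2 := by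
        exact sum_bound n

lemma abs_sin_periodic : Function.Periodic (fun x : ℝ => |Real.sin x|) π := by
  intro x
  simp [Real.sin_add_pi]

lemma int_abs_sin (m : ℕ) :
    ∫ θ in (0:ℝ)..π, |Real.sin (((m:ℝ)+1)*θ)| = 2 := by
  have hm : ((m:ℝ)+1) ≠ 0 := by positivity
  have h0 : ∫ θ in (0:ℝ)..π, |Real.sin (((m:ℝ)+1)*θ)|
      = ((m:ℝ)+1)⁻¹ • ∫ u in (((m:ℝ)+1)*0)..(((m:ℝ)+1)*π), |Real.sin u| := by
    rw [← intervalIntegral.integral_comp_mul_left (fun u => |Real.sin u|) hm]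
  have hper := abs_sin_periodic.intervalIntegral_add_zsmul_eq ((m:ℤ)+1) 0
    (fun t₁ t₂ => (by fun_prop : Continuous fun x : ℝ => |Real.sin x|).intervalIntegrable _ _)
  have hps : ∫ x in (0:ℝ)..π, |Real.sin x| = 2 := by
    have : ∀ x ∈ Set.uIcc (0:ℝ) π, |Real.sin x| = Real.sin x := by
      intro x hx
      rw [Set.uIcc_of_le Real.pi_pos.le] at hx
      exact abs_of_nonneg (Real.sin_nonneg_of_nonneg_of_le_pi hx.1 hx.2)
    rw [intervalIntegral.integral_congr this, integral_sin]
    norm_num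
  rw [h0]
  rw [mul_zero]
  have e1 : ((m:ℝ)+1)*π = 0 + ((m:ℤ)+1) • π := by
    rw [zsmul_eq_mul]; push_cast; ring
  rw [e1, hper]
  rw [show (0:ℝ) + π = π from zero_add π, hps, zsmul_eq_mul, smul_eq_mul]
  push_cast
  field_simp

lemma abs_U_int (n : ℕ) :
    ∫ s in (0:ℝ)..2, |(U ℝ n).eval (s-1)| = 2 := by
  set g : ℝ → ℝ := fun u => |(U ℝ n).eval (u-1)| with hg
  have hgc : Continuous g := by
    apply Continuous.abs
    exact (Polynomial.continuous (U ℝ n)).comp (continuous_id.sub continuous_const)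
  have hsub : ∫ θ in (0:ℝ)..π, (-Real.sin θ) • (g ∘ (fun θ => 1 + Real.cos θ)) θ
      = ∫ u in (1 + Real.cos 0)..(1 + Real.cos π), g u := by
    apply intervalIntegral.integral_comp_smul_deriv (f := fun θ => 1 + Real.cos θ)
    · intro x _
      simpa using (Real.hasDerivAt_cos x).const_add 1
    · fun_prop
    · exact hgc
  rw [Real.cos_zero, Real.cos_pi] at hsub
  norm_num at hsub
  rw [intervalIntegral.integral_symm (0:ℝ) 2] at hsub
  have flip : ∫ u in (0:ℝ)..2, g u = ∫ θ in (0:ℝ)..π, Real.sin θ * g (1 + Real.cos θ) := by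
    linarith
  rw [flip]
  have congr1 : ∀ θ ∈ Set.uIcc (0:ℝ) π, Real.sin θ * g (1 + Real.cos θ)
      = |Real.sin (((n:ℝ)+1)*θ)| := by
    intro θ hθ
    rw [Set.uIcc_of_le Real.pi_pos.le] at hθ
    have hs : 0 ≤ Real.sin θ := Real.sin_nonneg_of_nonneg_of_le_pi hθ.1 hθ.2
    have hU := U_real_cos θ (n : ℤ)
    push_cast at hU
    rw [hg]
    simp only [add_sub_cancel_left]
    rw [← abs_of_nonneg hs, ← abs_mul, mul_comm, hU]
  rw [intervalIntegral.integral_congr congr1, int_abs_sin]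

lemma exp_int (c : ℝ) (hc : c < 0) :
    ∫ s in (0:ℝ)..2, Real.exp (2*c*s) ≤ 1/(2*|c|) := by
  have hd : ∀ s : ℝ, HasDerivAt (fun u => Real.exp (2*c*u) / (2*c)) (Real.exp (2*c*s)) s := by
    intro s
    have h1 : HasDerivAt (fun u : ℝ => 2*c*u) (2*c) s := by
      simpa using (hasDerivAt_id s).const_mul (2*c)
    have h2 := (h1.exp).div_const (2*c)
    have hne : (2*c) ≠ 0 := by linarith
    rw [show Real.exp (2*c*s) * (2*c) / (2*c) = Real.exp (2*c*s) from by rw [mul_div_cancel_right₀ _ hne]] at h2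
    exact h2
  rw [intervalIntegral.integral_eq_sub_of_hasDerivAt (fun s _ => hd s)
    ((by fun_prop : Continuous fun s : ℝ => Real.exp (2*c*s)).intervalIntegrable _ _)]
  rw [abs_of_neg hc]
  have h1 : Real.exp (2*c*2) ≤ 1 := Real.exp_le_one_iff.2 (by nlinarith)
  have hcpos : (0:ℝ) < -c := by linarith
  have e : (Real.exp (2*c*2)/(2*c) - Real.exp (2*c*0)/(2*c)) = (1 - Real.exp (2*c*2))/(2*(-c)) := by
    rw [mul_zero, Real.exp_zero]
    field_simp
    ring
  rw [e]
  gcongr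
  linarith [Real.exp_pos (2*c*2)]

lemma cs_int (f g : ℝ → ℝ) (hf : Continuous f) (hg : Continuous g) :
    (∫ s in (0:ℝ)..2, f s * g s)^2
      ≤ (∫ s in (0:ℝ)..2, f s ^ 2) * (∫ s in (0:ℝ)..2, g s ^ 2) := by
  set A := ∫ s in (0:ℝ)..2, f s ^ 2 with hA
  set B := ∫ s in (0:ℝ)..2, g s ^ 2 with hB
  set C := ∫ s in (0:ℝ)..2, f s * g s with hC
  have hq : ∀ t : ℝ, 0 ≤ A * (t*t) + (2*C)*t + B := by
    intro t
    have e : A * (t*t) + (2*C)*t + B = ∫ s in (0:ℝ)..2, (t * f s + g s)^2 := by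
      have : ∀ s : ℝ, (t * f s + g s)^2 = (t*t) * f s ^2 + (2*t) * (f s * g s) + g s ^2 := by
        intro s; ring
      simp_rw [this]
      rw [intervalIntegral.integral_add (((by fun_prop : Continuous fun s => (t*t) * f s ^2).intervalIntegrable _ _).add
          ((by fun_prop : Continuous fun s => (2*t) * (f s * g s)).intervalIntegrable _ _))
          ((by fun_prop : Continuous fun s => g s ^2).intervalIntegrable _ _),
        intervalIntegral.integral_add ((by fun_prop : Continuous fun s => (t*t) * f s ^2).intervalIntegrable _ _)
          ((by fun_prop : Continuous fun s => (2*t) * (f s * g s)).intervalIntegrable _ _),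
        intervalIntegral.integral_const_mul, intervalIntegral.integral_const_mul]
      ring
    rw [e]
    apply intervalIntegral.integral_nonneg (by norm_num)
    intro s _
    positivity
  have hd := discrim_le_zero hq
  rw [discrim] at hd
  nlinarith

theorem stmt_13 (z : ℂ) (hz : z.re ≤ 0) (hz' : z.re ≠ 0) (n : ℕ) :
    ‖∫ s in (0:ℝ)..2, ((U ℂ n).eval ((s : ℂ) - 1)) * Complex.exp (z * s)‖
      ≤ min 2 ((2 * |z.re|) ^ (-(1:ℝ)/2) * (Real.log ((n : ℝ) + 1) + 2) ^ ((1:ℝ)/2)) := by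
  have hzneg : z.re < 0 := lt_of_le_of_ne hz hz'
  set r : ℝ → ℝ := fun s => (U ℝ n).eval (s-1) with hr
  have hrc : Continuous r :=
    (Polynomial.continuous (U ℝ (n:ℤ))).comp (continuous_id.sub continuous_const)
  have hnorm : ∀ s : ℝ, ‖(U ℂ n).eval ((s:ℂ) - 1) * Complex.exp (z * s)‖
      = |r s| * Real.exp (z.re * s) := by
    intro s
    have hev : (U ℂ n).eval ((s:ℂ)-1) = ((r s : ℝ) : ℂ) := by
      have e0 : ((s:ℂ)-1) = ((s-1:ℝ):ℂ) := by push_cast; ring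
      rw [e0, show ((s-1:ℝ):ℂ) = (algebraMap ℝ ℂ) (s-1) from rfl,
        ← map_U (algebraMap ℝ ℂ) (n:ℤ), Polynomial.eval_map, Polynomial.eval₂_at_apply]
      rfl
    rw [hev, norm_mul, Complex.norm_real, Real.norm_eq_abs, Complex.norm_exp]
    congr 2
    simp [Complex.mul_re]
  have step1 : ‖∫ s in (0:ℝ)..2, ((U ℂ n).eval ((s:ℂ) - 1) * Complex.exp (z * s))‖
      ≤ ∫ s in (0:ℝ)..2, |r s| * Real.exp (z.re * s) := by
    refine le_trans (intervalIntegral.norm_integral_le_integral_norm (by norm_num)) ?_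
    apply le_of_eq
    apply intervalIntegral.integral_congr
    intro s _
    exact hnorm s
  set C := ∫ s in (0:ℝ)..2, |r s| * Real.exp (z.re * s) with hCdef
  have hC0 : 0 ≤ C := by
    apply intervalIntegral.integral_nonneg (by norm_num)
    intro s _
    positivity
  -- bound A
  have boundA : C ≤ 2 := by
    have hmono : C ≤ ∫ s in (0:ℝ)..2, |r s| := by
      apply intervalIntegral.integral_mono_on (by norm_num)
      · exact ((hrc.abs.mul (by fun_prop)).intervalIntegrable _ _)
      · exact (hrc.abs.intervalIntegrable _ _)
      · intro s hs
        have : Real.exp (z.re * s) ≤ 1 := Real.exp_le_one_iff.2 (by nlinarith [hs.1])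
        have h0 : 0 ≤ |r s| := abs_nonneg _
        calc |r s| * Real.exp (z.re * s) ≤ |r s| * 1 := by
              apply mul_le_mul_of_nonneg_left this h0
          _ = |r s| := mul_one _
    exact hmono.trans (le_of_eq (abs_U_int n))
  -- bound B
  set L : ℝ := Real.log ((n:ℝ)+1) + 2 with hL
  have hL0 : 0 ≤ L := by
    have : 0 ≤ Real.log ((n:ℝ)+1) := Real.log_nonneg (by push_cast; linarith [Nat.cast_nonneg (α := ℝ) n])
    linarith
  set B' : ℝ := 1/(2*|z.re|) with hB'
  have hB'0 : 0 < B' := by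
    rw [hB']
    have : 0 < |z.re| := abs_pos.2 hz'
    positivity
  have boundB : C ≤ Real.sqrt B' * Real.sqrt L := by
    have hcs := cs_int (fun s => |r s|) (fun s => Real.exp (z.re * s)) hrc.abs (by fun_prop)
    simp only [sq_abs] at hcs
    have hA : (∫ s in (0:ℝ)..2, r s ^ 2) ≤ L := U_sq_integral n
    have hA0 : 0 ≤ ∫ s in (0:ℝ)..2, r s ^ 2 := by
      apply intervalIntegral.integral_nonneg (by norm_num)
      intro s _; positivity
    have hB : (∫ s in (0:ℝ)..2, Real.exp (z.re * s) ^ 2) ≤ B' := by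
      have e : ∀ s : ℝ, Real.exp (z.re * s) ^ 2 = Real.exp (2*z.re*s) := by
        intro s
        rw [← Real.exp_nat_mul]
        ring_nf
      simp_rw [e]
      exact exp_int z.re hzneg
    have hBge : 0 ≤ ∫ s in (0:ℝ)..2, Real.exp (z.re * s) ^ 2 := by
      apply intervalIntegral.integral_nonneg (by norm_num)
      intro s _; positivity
    have hC2 : C^2 ≤ L * B' := by
      calc C^2 ≤ _ := hcs
        _ ≤ L * B' := mul_le_mul hA hB hBge hL0
    calc C = Real.sqrt (C^2) := by rw [Real.sqrt_sq hC0]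
      _ ≤ Real.sqrt (L * B') := Real.sqrt_le_sqrt hC2
      _ = Real.sqrt B' * Real.sqrt L := by
          rw [Real.sqrt_mul hL0, mul_comm]
  have rpow_eq : (2 * |z.re|) ^ (-(1:ℝ)/2) * L ^ ((1:ℝ)/2) = Real.sqrt B' * Real.sqrt L := by
    have h2 : (0:ℝ) < 2*|z.re| := by
      have : 0 < |z.re| := abs_pos.2 hz'
      positivity
    rw [show (-(1:ℝ)/2) = -(1/2) by norm_num, Real.rpow_neg h2.le,
      ← Real.sqrt_eq_rpow, ← Real.sqrt_eq_rpow, hB', ← Real.sqrt_inv, one_div]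
  refine le_min (le_trans step1 boundA) ?_
  rw [rpow_eq]
  exact le_trans step1 boundB
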